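/- Let $n \geq 3$, $\alpha, \beta \in \mathbb{R}$, and let $V : (0,1] \to [0,\infty)$ be $C^1$ with $\alpha\left(r V'(r) + (n - 2\beta - \alpha - 2)V(r)\right) \geq 0$ for all $r \in (0,1]$ and $\lim_{r \to 0^+} r^{n-2} V(r) = 0$. Then for every $C^1$ function $\eta : [0,1] \to \mathbb{R}$ with compact support in $[0,1)$, $\int_0^1 r^{n-3} V(r)\left(\left(r\eta'(r) + \beta\eta(r)\right)^2 - \frac{\alpha^2}{4}\eta(r)^2\right) dr \geq 0$. -/

import Mathlib

open Set Filter MeasureTheory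

theorem stmt_5 (n : ℕ) (hn : 3 ≤ n) (alpha beta : ℝ)
    (V V' : ℝ → ℝ)
    (hVpos : ∀ r ∈ Ioc (0:ℝ) 1, 0 ≤ V r)
    (hVdiff : ∀ r ∈ Ioc (0:ℝ) 1, HasDerivAt V (V' r) r)
    (hV'cont : ContinuousOn V' (Ioc (0:ℝ) 1))
    (hineq : ∀ r ∈ Ioc (0:ℝ) 1,
      0 ≤ alpha * (r * V' r + ((n : ℝ) - 2 * beta - alpha - 2) * V r))
    (hlim : Tendsto (fun r : ℝ => r ^ (n - 2) * V r) (nhdsWithin 0 (Ioi 0)) (nhds 0))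
    (eta : ℝ → ℝ) (heta : ContDiff ℝ 1 eta)
    (hsupp : ∃ a : ℝ, a < 1 ∧ ∀ r, a ≤ r → eta r = 0) :
    0 ≤ ∫ r in Ioo (0:ℝ) 1,
      r ^ (n - 3) * V r *
        ((r * deriv eta r + beta * eta r) ^ 2 - alpha ^ 2 / 4 * (eta r) ^ 2) := by
  obtain ⟨m, rfl⟩ : ∃ m, n = m + 3 := ⟨n - 3, by omega⟩
  have hm3 : m + 3 - 3 = m := by omega
  have hm2 : m + 3 - 2 = m + 1 := by omega
  obtain ⟨a, ha1, ha0⟩ := hsupp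
  have heta_d : ∀ r, HasDerivAt eta (deriv eta r) r := fun r =>
    ((heta.differentiable one_ne_zero) r).hasDerivAt
  have heta_c : Continuous eta := heta.continuous
  have heta_dc : Continuous (deriv eta) := heta.continuous_deriv le_rfl
  simp only [hm3] at *
  rw [hm2] at hlim
  set f : ℝ → ℝ := fun r => r ^ m * V r *
      ((r * deriv eta r + beta * eta r) ^ 2 - alpha ^ 2 / 4 * (eta r) ^ 2) with hfdef
  by_cases hf : IntegrableOn f (Ioo 0 1) volume
  swap
  · rw [integral_undef hf]
  set φ : ℝ → ℝ := fun r => ((m + 1 : ℕ) : ℝ) * r ^ m * V r * eta r ^ 2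
      + r ^ (m + 1) * V' r * eta r ^ 2 + r ^ (m + 1) * V r * (2 * eta r ^ 1 * deriv eta r)
      with hφdef
  have hVc : ContinuousOn V (Ioc 0 1) := fun r hr =>
    (hVdiff r hr).continuousAt.continuousWithinAt
  have hFderiv : ∀ r ∈ Ioc (0:ℝ) 1,
      HasDerivAt (fun x => x ^ (m + 1) * V x * eta x ^ 2) (φ r) r := by
    intro r hr
    have h2 : HasDerivAt (fun x => x ^ (m + 1) * V x * eta x ^ 2) _ r :=
      ((hasDerivAt_pow (m + 1) r).mul (hVdiff r hr)).mul ((heta_d r).pow 2)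
    convert h2 using 1
    simp only [hφdef, Nat.add_sub_cancel, Pi.mul_apply]
    ring
  have key : ∀ ε ∈ Ioo (0:ℝ) 1,
      alpha / 2 * (ε ^ (m + 1) * V ε * eta ε ^ 2) ≤ ∫ r in Ioo ε 1, f r := by
    intro ε hε
    have hsub : Icc ε 1 ⊆ Ioc 0 1 := fun x hx => ⟨lt_of_lt_of_le hε.1 hx.1, hx.2⟩
    have huIcc : uIcc ε 1 = Icc ε 1 := uIcc_of_le hε.2.le
    have hφc : ContinuousOn φ (Icc ε 1) := by
      apply ContinuousOn.add
      apply ContinuousOn.add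
      · exact (continuousOn_const.mul (continuousOn_pow m)).mul (hVc.mono hsub)
          |>.mul ((heta_c.pow 2).continuousOn)
      · exact ((continuousOn_pow (m+1)).mul (hV'cont.mono hsub)).mul
          ((heta_c.pow 2).continuousOn)
      · exact ((continuousOn_pow (m+1)).mul (hVc.mono hsub)).mul
          (((continuous_const.mul (heta_c.pow 1)).mul heta_dc).continuousOn)
    have hfc : ContinuousOn f (Icc ε 1) := by
      apply ContinuousOn.mul
      · exact (continuousOn_pow m).mul (hVc.mono hsub)
      · exact (((((continuous_id.mul heta_dc).add (continuous_const.mul heta_c)).pow 2).sub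
          (continuous_const.mul (heta_c.pow 2)))).continuousOn
    have hφint : IntervalIntegrable φ volume ε 1 := by
      apply ContinuousOn.intervalIntegrable
      rwa [huIcc]
    have hFTC : ∫ x in ε..1, φ x = 0 - ε ^ (m + 1) * V ε * eta ε ^ 2 := by
      rw [intervalIntegral.integral_eq_sub_of_hasDerivAt
        (f := fun x => x ^ (m + 1) * V x * eta x ^ 2) (f' := φ)
        (fun x hx => hFderiv x (hsub (huIcc ▸ hx))) hφint]
      rw [ha0 1 ha1.le]
      ring
    have hφIoo : ∫ x in ε..1, φ x = ∫ r in Ioo ε 1, φ r := by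
      rw [intervalIntegral.integral_of_le hε.2.le, integral_Ioc_eq_integral_Ioo]
    have hfint : IntegrableOn f (Ioo ε 1) volume :=
      (hfc.integrableOn_Icc).mono_set Ioo_subset_Icc_self
    have hφint' : IntegrableOn φ (Ioo ε 1) volume :=
      (hφc.integrableOn_Icc).mono_set Ioo_subset_Icc_self
    have hpos : ∀ r ∈ Ioo ε 1, 0 ≤ f r + alpha / 2 * φ r := by
      intro r hr
      have hr' : r ∈ Ioc (0:ℝ) 1 := ⟨lt_trans hε.1 hr.1, hr.2.le⟩
      have h1 := hVpos r hr'
      have h2 := hineq r hr'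
      push_cast at h2
      have hid : f r + alpha / 2 * φ r =
          r ^ m * V r * (r * deriv eta r + beta * eta r + alpha / 2 * eta r) ^ 2
          + alpha * (r * V' r + ((m : ℝ) + 3 - 2 * beta - alpha - 2) * V r)
            * (r ^ m * eta r ^ 2) / 2 := by
        simp only [hfdef, hφdef, pow_succ]
        push_cast
        ring
      rw [hid]
      have hrm : (0:ℝ) ≤ r ^ m := le_of_lt (pow_pos (lt_trans hε.1 hr.1) m)
      apply add_nonneg
      · exact mul_nonneg (mul_nonneg hrm h1) (sq_nonneg _)
      · exact div_nonneg (mul_nonneg h2 (mul_nonneg hrm (sq_nonneg _))) two_pos.le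
    have hsplit : ∫ r in Ioo ε 1, f r =
        (∫ r in Ioo ε 1, (f r + alpha / 2 * φ r)) - alpha / 2 * ∫ r in Ioo ε 1, φ r := by
      rw [integral_add hfint (hφint'.const_mul _), MeasureTheory.integral_const_mul]
      ring
    have hnn : 0 ≤ ∫ r in Ioo ε 1, (f r + alpha / 2 * φ r) :=
      setIntegral_nonneg measurableSet_Ioo hpos
    rw [hsplit, ← hφIoo, hFTC]
    nlinarith [hnn]
  -- limit argument
  set ε : ℕ → ℝ := fun k => 1 / ((k : ℝ) + 2) with hεdef
  have hεmem : ∀ k, ε k ∈ Ioo (0:ℝ) 1 := by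
    intro k
    constructor
    · positivity
    · rw [div_lt_one (by positivity)]
      have : (0:ℝ) ≤ (k:ℝ) := Nat.cast_nonneg k
      linarith
  have hεlim : Tendsto ε atTop (nhds 0) := by
    have h0 : Tendsto (fun k : ℕ => (k : ℝ) + 2) atTop atTop :=
      tendsto_atTop_add_const_right _ 2 tendsto_natCast_atTop_atTop
    show Tendsto (fun k : ℕ => 1 / ((k : ℝ) + 2)) atTop (nhds 0)
    simp only [one_div]
    exact h0.inv_tendsto_atTop
  have hεlim' : Tendsto ε atTop (nhdsWithin 0 (Ioi 0)) :=
    tendsto_nhdsWithin_of_tendsto_nhds_of_eventually_within _ hεlim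
      (Eventually.of_forall fun k => (hεmem k).1)
  have hmono : Monotone (fun k => Ioo (ε k) 1) := by
    intro k l hkl
    apply Ioo_subset_Ioo_left
    apply one_div_le_one_div_of_le (by positivity)
    have : (k : ℝ) ≤ (l : ℝ) := Nat.cast_le.mpr hkl
    linarith
  have hunion : (⋃ k, Ioo (ε k) 1) = Ioo (0:ℝ) 1 := by
    apply Subset.antisymm
    · exact iUnion_subset fun k => Ioo_subset_Ioo_left (hεmem k).1.le
    · intro x hx
      obtain ⟨k, hk⟩ := exists_nat_gt (1 / x)
      refine mem_iUnion.mpr ⟨k, ?_, hx.2⟩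
      rw [div_lt_iff₀ (by positivity)]
      rw [div_lt_iff₀ hx.1] at hk
      nlinarith [hx.1]
  have hIlim : Tendsto (fun k => ∫ r in Ioo (ε k) 1, f r) atTop
      (nhds (∫ r in Ioo (0:ℝ) 1, f r)) := by
    have := tendsto_setIntegral_of_monotone (fun k => measurableSet_Ioo) hmono
      (hunion ▸ hf)
    rwa [hunion] at this
  have hblim : Tendsto (fun k => alpha / 2 * ((ε k) ^ (m + 1) * V (ε k) * eta (ε k) ^ 2))
      atTop (nhds 0) := by
    have h1 : Tendsto (fun k => (ε k) ^ (m + 1) * V (ε k)) atTop (nhds 0) :=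
      hlim.comp hεlim'
    have h2 : Tendsto (fun k => eta (ε k) ^ 2) atTop (nhds (eta 0 ^ 2)) :=
      ((heta_c.tendsto 0).comp hεlim).pow 2
    have := (h1.mul h2).const_mul (alpha / 2)
    simpa using this
  exact le_of_tendsto_of_tendsto' hblim hIlim fun k => key (ε k) (hεmem k)
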